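/- If F is a positive linear map on matrices, then its induced 1-to-1 norm equals the operator (infinity) norm of F†(𝟙): ||F||_{1→1} = ||F†(𝟙)||_∞. -/

import Mathlib

noncomputable section

open Matrix ComplexOrder

abbrev Mat (d : ℕ) := Matrix (Fin d) (Fin d) ℂ

variable {d : ℕ}

open scoped MatrixOrder in
/-- Singular values of a matrix: eigenvalues of `sqrt (ρᴴ * ρ)`. -/
noncomputable def singVals (ρ : Mat d) : Fin d → ℝ :=
  (CFC.sqrt_nonneg (ρᴴ * ρ)).posSemidef.1.eigenvalues

/-- Schatten `p`-norm. -/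
noncomputable def schattenNorm (p : ℝ) (ρ : Mat d) : ℝ :=
  (∑ i, singVals ρ i ^ p) ^ (1 / p)

/-- Trace norm (Schatten 1-norm). -/
noncomputable def traceNorm (ρ : Mat d) : ℝ := schattenNorm 1 ρ

/-- Operator norm (largest singular value). -/
noncomputable def opNorm (ρ : Mat d) : ℝ := ⨆ i, singVals ρ i

/-- Induced `a → b` Schatten norm of a linear map on matrices. -/
noncomputable def inducedNorm (a b : ℝ) (F : Mat d →ₗ[ℂ] Mat d) : ℝ :=
  sSup {r : ℝ | ∃ σ : Mat d, σ ≠ 0 ∧ r = schattenNorm a (F σ) / schattenNorm b σ}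

/-- Induced 1→1 norm, maximised over Hermitian matrices. -/
noncomputable def norm11 (F : Mat d →ₗ[ℂ] Mat d) : ℝ :=
  sSup {r : ℝ | ∃ σ : Mat d, σ.IsHermitian ∧ σ ≠ 0 ∧ r = traceNorm (F σ) / traceNorm σ}

/-- Ergodicity coefficient. -/
noncomputable def ergCoeff (F : Mat d →ₗ[ℂ] Mat d) : ℝ :=
  sSup {r : ℝ | ∃ σ : Mat d, σ.IsHermitian ∧ σ.trace = 0 ∧ σ ≠ 0 ∧
    r = traceNorm (F σ) / traceNorm σ}

/-- A positive map sends positive semidefinite matrices to positive semidefinite matrices. -/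
def IsPositiveMap (F : Mat d →ₗ[ℂ] Mat d) : Prop :=
  ∀ σ : Mat d, σ.PosSemidef → (F σ).PosSemidef

def IsTracePreserving (F : Mat d →ₗ[ℂ] Mat d) : Prop :=
  ∀ σ : Mat d, (F σ).trace = σ.trace

/-- Ampliation `F ⊗ id_n` acting blockwise. -/
def ampliate (F : Mat d →ₗ[ℂ] Mat d) (n : ℕ)
    (M : Matrix (Fin d × Fin n) (Fin d × Fin n) ℂ) : Matrix (Fin d × Fin n) (Fin d × Fin n) ℂ :=
  Matrix.of fun p q => F (Matrix.of fun i j => M (i, p.2) (j, q.2)) p.1 q.1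

def IsCompletelyPositive (F : Mat d →ₗ[ℂ] Mat d) : Prop :=
  ∀ (n : ℕ) (M : Matrix (Fin d × Fin n) (Fin d × Fin n) ℂ),
    M.PosSemidef → (ampliate F n M).PosSemidef

/-- The conjugation map `ρ ↦ s * ρ * s`. -/
noncomputable def conjMap (s : Mat d) : Mat d →ₗ[ℂ] Mat d where
  toFun ρ := s * ρ * s
  map_add' x y := by simp [Matrix.mul_add, Matrix.add_mul]
  map_smul' c x := by simp [Matrix.mul_smul, Matrix.smul_mul]

/-- The projection onto the stationary state: `σ ↦ Tr(σ) • ρ∞`. -/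
noncomputable def statProj (ρinf : Mat d) : Mat d →ₗ[ℂ] Mat d where
  toFun σ := σ.trace • ρinf
  map_add' x y := by simp [Matrix.trace_add, add_smul]
  map_smul' c x := by simp [Matrix.trace_smul, smul_smul]

/-- `F` has spectral radius one. -/
def HasSpectralRadiusOne (F : Mat d →ₗ[ℂ] Mat d) : Prop :=
  IsGreatest {r : ℝ | ∃ μ ∈ spectrum ℂ (F : Module.End ℂ (Mat d)), r = ‖μ‖} 1

end
noncomputable section Helpers
open Matrix ComplexOrder
variable {d : ℕ}


lemma conj_mul_conj (U X Y : Mat d) (h1 : star U * U = 1) :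
    (U * X * star U) * (U * Y * star U) = U * (X * Y) * star U := by
  rw [Matrix.mul_assoc (U * X), ← Matrix.mul_assoc (star U) (U * Y) (star U),
    ← Matrix.mul_assoc (star U) U Y, h1, Matrix.one_mul,
    ← Matrix.mul_assoc (U * X) Y (star U), Matrix.mul_assoc U X Y]

noncomputable def cfcM {A : Mat d} (hA : A.IsHermitian) (f : ℝ → ℝ) : Mat d :=
  (hA.eigenvectorUnitary : Mat d) * Matrix.diagonal (RCLike.ofReal ∘ f ∘ hA.eigenvalues) *
    star (hA.eigenvectorUnitary : Mat d)

lemma cfcM_id {A : Mat d} (hA : A.IsHermitian) : cfcM hA (fun x => x) = A := by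
  rw [cfcM]; exact hA.spectral_theorem.symm

lemma cfcM_mul {A : Mat d} (hA : A.IsHermitian) (f g : ℝ → ℝ) :
    cfcM hA f * cfcM hA g = cfcM hA (fun x => f x * g x) := by
  unfold cfcM
  rw [conj_mul_conj _ _ _ ((Matrix.mem_unitaryGroup_iff').mp hA.eigenvectorUnitary.2),
    Matrix.diagonal_mul_diagonal]
  congr 2
  ext i j
  by_cases h : i = j <;> simp [h, Matrix.diagonal_apply, Function.comp]

lemma cfcM_sub {A : Mat d} (hA : A.IsHermitian) (f g : ℝ → ℝ) :
    cfcM hA f - cfcM hA g = cfcM hA (fun x => f x - g x) := by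
  unfold cfcM
  rw [← Matrix.sub_mul, ← Matrix.mul_sub, Matrix.diagonal_sub]
  congr 2
  ext i j
  by_cases h : i = j <;> simp [h, Matrix.diagonal_apply, Function.comp]

lemma cfcM_add {A : Mat d} (hA : A.IsHermitian) (f g : ℝ → ℝ) :
    cfcM hA f + cfcM hA g = cfcM hA (fun x => f x + g x) := by
  unfold cfcM
  rw [← Matrix.add_mul, ← Matrix.mul_add, Matrix.diagonal_add]
  congr 2
  ext i j
  by_cases h : i = j <;> simp [h, Matrix.diagonal_apply, Function.comp]

lemma cfcM_const {A : Mat d} (hA : A.IsHermitian) (c : ℝ) :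
    cfcM hA (fun _ => c) = (c : ℂ) • 1 := by
  unfold cfcM
  have hd : Matrix.diagonal (RCLike.ofReal ∘ (fun _ => c) ∘ hA.eigenvalues) = (c:ℂ) • (1 : Mat d) := by
    ext i j
    by_cases h : i = j <;> simp [Matrix.diagonal, Matrix.one_apply, h, RCLike.ofReal]
  rw [hd, Matrix.mul_smul, Matrix.smul_mul, Matrix.mul_one,
    (Matrix.mem_unitaryGroup_iff).mp hA.eigenvectorUnitary.2]

lemma cfcM_trace {A : Mat d} (hA : A.IsHermitian) (f : ℝ → ℝ) :
    (cfcM hA f).trace = ((∑ i, f (hA.eigenvalues i) : ℝ) : ℂ) := by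
  unfold cfcM
  rw [Matrix.trace_mul_cycle, (Matrix.mem_unitaryGroup_iff').mp hA.eigenvectorUnitary.2, one_mul,
    Matrix.trace_diagonal]
  push_cast
  rfl

lemma cfcM_posSemidef {A : Mat d} (hA : A.IsHermitian) (f : ℝ → ℝ)
    (hf : ∀ i, 0 ≤ f (hA.eigenvalues i)) :
    (cfcM hA f).PosSemidef := by
  have hd : (Matrix.diagonal (RCLike.ofReal ∘ f ∘ hA.eigenvalues) : Mat d).PosSemidef := by
    rw [Matrix.posSemidef_diagonal_iff]
    intro i
    simpa using Complex.zero_le_real.mpr (hf _)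
  simpa [cfcM, Matrix.star_eq_conjTranspose] using
    hd.mul_mul_conjTranspose_same (hA.eigenvectorUnitary : Mat d)

lemma cfcM_isHermitian {A : Mat d} (hA : A.IsHermitian) (f : ℝ → ℝ) :
    (cfcM hA f).IsHermitian := by
  have hd : (Matrix.diagonal (RCLike.ofReal ∘ f ∘ hA.eigenvalues) : Mat d).IsHermitian := by
    apply Matrix.isHermitian_diagonal_of_self_adjoint
    funext i
    simp [Function.comp, RCLike.star_def]
  simpa [cfcM, Matrix.star_eq_conjTranspose] using
    Matrix.isHermitian_mul_mul_conjTranspose (hA.eigenvectorUnitary : Mat d) hd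

lemma eig_congr {A B : Mat d} (h : A = B) (hA : A.IsHermitian) (hB : B.IsHermitian) :
    hA.eigenvalues = hB.eigenvalues := by subst h; rfl

lemma trace_eq_sum_eig {A : Mat d} (hA : A.IsHermitian) :
    A.trace = ((∑ i, hA.eigenvalues i : ℝ) : ℂ) := by
  conv_lhs => rw [hA.spectral_theorem]
  rw [Unitary.conjStarAlgAut_apply, Matrix.trace_mul_cycle]
  rw [(Matrix.mem_unitaryGroup_iff').mp hA.eigenvectorUnitary.2, one_mul,
    Matrix.trace_diagonal]
  push_cast
  rfl

lemma herm_eq_zero_of_eig {A : Mat d} (hA : A.IsHermitian)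
    (h : ∀ i, hA.eigenvalues i = 0) : A = 0 := by
  rw [← cfcM_id hA]
  unfold cfcM
  have hd : Matrix.diagonal (RCLike.ofReal ∘ (fun x : ℝ => x) ∘ hA.eigenvalues) = (0 : Mat d) := by
    ext i j
    by_cases hij : i = j <;> simp [Matrix.diagonal_apply, hij, h]
  rw [hd, Matrix.mul_zero, Matrix.zero_mul]

open scoped MatrixOrder in
lemma singVals_eq_eigenvalues {ρ : Mat d} (hρ : ρ.PosSemidef) :
    singVals ρ = hρ.1.eigenvalues := by
  have h : CFC.sqrt (ρᴴ * ρ) = ρ :=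
    (CFC.sqrt_eq_iff _ _ (Matrix.posSemidef_conjTranspose_mul_self ρ).nonneg hρ.nonneg).mpr
      (by rw [hρ.1.eq])
  exact eig_congr h _ _

open scoped MatrixOrder in
lemma singVals_nonneg (ρ : Mat d) (i : Fin d) : 0 ≤ singVals ρ i :=
  (CFC.sqrt_nonneg (ρᴴ * ρ)).posSemidef.eigenvalues_nonneg i

lemma traceNorm_eq_sum (ρ : Mat d) : traceNorm ρ = ∑ i, singVals ρ i := by
  unfold traceNorm schattenNorm
  norm_num [Real.rpow_one]

open scoped MatrixOrder in
lemma traceNorm_herm {H : Mat d} (hH : H.IsHermitian) :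
    traceNorm H = ∑ i, |hH.eigenvalues i| := by
  have habs : cfcM hH (fun x => |x|) = CFC.sqrt (Hᴴ * H) := by
    refine ((CFC.sqrt_eq_iff _ _ (Matrix.posSemidef_conjTranspose_mul_self H).nonneg
      (cfcM_posSemidef hH _ (fun i => abs_nonneg _)).nonneg).mpr ?_).symm
    have h2 : cfcM hH (fun x => |x|) * cfcM hH (fun x => |x|) = cfcM hH (fun x => x * x) := by
      rw [cfcM_mul]
      simp only [abs_mul_abs_self]
    have h3 : cfcM hH (fun x => x) * cfcM hH (fun x => x) = cfcM hH (fun x => x * x) :=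
      cfcM_mul _ _ _
    rw [h2, ← h3, cfcM_id, hH.eq]
  have h4 : ((∑ i, (CFC.sqrt_nonneg (Hᴴ * H)).posSemidef.1.eigenvalues i : ℝ) : ℂ)
      = ((∑ i, |hH.eigenvalues i| : ℝ) : ℂ) := by
    rw [← trace_eq_sum_eig, ← cfcM_trace hH (fun x => |x|), habs]
  have h5 := Complex.ofReal_injective h4
  rw [traceNorm_eq_sum]
  unfold singVals
  exact h5

lemma traceNorm_psd {ρ : Mat d} (hρ : ρ.PosSemidef) : traceNorm ρ = (ρ.trace).re := by
  rw [traceNorm_herm hρ.1, trace_eq_sum_eig hρ.1, Complex.ofReal_re]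
  exact Finset.sum_congr rfl fun i _ => abs_of_nonneg (hρ.eigenvalues_nonneg i)

open scoped MatrixOrder in
lemma traceNorm_pos {ρ : Mat d} (h : ρ ≠ 0) : 0 < traceNorm ρ := by
  rw [traceNorm_eq_sum]
  rcases (Finset.sum_nonneg fun i _ => singVals_nonneg ρ i).lt_or_eq with hlt | heq
  · exact hlt
  · exfalso
    apply h
    have hall : ∀ i, singVals ρ i = 0 := by
      intro i
      have := (Finset.sum_eq_zero_iff_of_nonneg (fun i _ => singVals_nonneg ρ i)).mp heq.symm
      exact this i (Finset.mem_univ i)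
    have hz : CFC.sqrt (ρᴴ * ρ) = 0 :=
      herm_eq_zero_of_eig _ hall
    have := CFC.sqrt_mul_sqrt_self (ρᴴ * ρ) (Matrix.posSemidef_conjTranspose_mul_self ρ).nonneg
    rw [hz, Matrix.mul_zero] at this
    exact Matrix.conjTranspose_mul_self_eq_zero.mp this.symm

lemma psd_trace_nonneg {ρ : Mat d} (hρ : ρ.PosSemidef) : (0:ℂ) ≤ ρ.trace := by
  rw [trace_eq_sum_eig hρ.1]
  exact Complex.zero_le_real.mpr (Finset.sum_nonneg fun i _ => hρ.eigenvalues_nonneg i)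

open scoped MatrixOrder in
lemma psd_mul_trace_nonneg {A B : Mat d} (hA : A.PosSemidef) (hB : B.PosSemidef) :
    0 ≤ ((A * B).trace).re := by
  have h1 : A * B = CFC.sqrt A * (CFC.sqrt A * B) := by
    rw [← Matrix.mul_assoc, CFC.sqrt_mul_sqrt_self A hA.nonneg]
  have h2 : (A * B).trace = (CFC.sqrt A * B * CFC.sqrt A).trace := by
    rw [h1, Matrix.trace_mul_comm, Matrix.mul_assoc]
  have h3 : (CFC.sqrt A * B * CFC.sqrt A).PosSemidef := by
    have := hB.conjTranspose_mul_mul_same (CFC.sqrt A)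
    rwa [(CFC.sqrt_nonneg A).posSemidef.1.eq] at this
  rw [h2]
  have := psd_trace_nonneg h3
  rw [Complex.le_def] at this
  exact this.1

lemma trace_mul_std (M : Mat d) (i j : Fin d) :
    (M * Matrix.single i j 1).trace = M j i := by
  classical
  simp [Matrix.trace, Matrix.diag, Matrix.mul_apply, Matrix.single, ite_and,
    Finset.sum_ite_eq]

lemma stdBasis_conjT (i j : Fin d) :
    (Matrix.single i j (1:ℂ))ᴴ = Matrix.single j i 1 := by
  ext a b
  simp [Matrix.conjTranspose_apply, Matrix.single, and_comm]

lemma trace_mul_outer (M : Mat d) (v : Fin d → ℂ) :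
    (M * Matrix.vecMulVec v (star v)).trace = dotProduct (star v) (M *ᵥ v) := by
  simp only [Matrix.trace, Matrix.diag, Matrix.mul_apply, Matrix.vecMulVec_apply,
    Pi.star_apply, dotProduct, Matrix.mulVec, Finset.mul_sum]
  apply Finset.sum_congr rfl
  intro k _
  apply Finset.sum_congr rfl
  intro l _
  ring

lemma outer_posSemidef (v : Fin d → ℂ) : (Matrix.vecMulVec v (star v)).PosSemidef := by
  refine Matrix.PosSemidef.of_dotProduct_mulVec_nonneg ?_ ?_
  · ext a b
    simp [Matrix.conjTranspose_apply, Matrix.vecMulVec_apply, mul_comm]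
  · intro x
    have h1 : Matrix.vecMulVec v (star v) *ᵥ x = (dotProduct (star v) x) • v := by
      ext a
      simp [Matrix.mulVec, Matrix.vecMulVec_apply, dotProduct, Finset.mul_sum,
        Finset.sum_mul, mul_assoc]
      exact Finset.sum_congr rfl fun l _ => by ring
    rw [h1]
    have h2 : dotProduct (star x) ((dotProduct (star v) x) • v)
        = star (dotProduct (star v) x) * (dotProduct (star v) x) := by
      rw [dotProduct_smul]
      rw [Matrix.star_dotProduct]
      simp [smul_eq_mul, mul_comm]
    rw [h2]
    exact star_mul_self_nonneg _

lemma norm11_aux {d : ℕ} (F Fd : Mat d →ₗ[ℂ] Mat d)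
    (hF : IsPositiveMap F)
    (hadj : ∀ A B : Mat d, (A * F B).trace = (Fd A * B).trace) :
    norm11 F = opNorm (Fd 1) := by
  classical
  rcases Nat.eq_zero_or_pos d with hd | hd
  · subst hd
    have h1 : norm11 F = 0 := by
      unfold norm11
      convert Real.sSup_empty using 2
      ext r
      simp only [Set.mem_setOf_eq, Set.mem_empty_iff_false, iff_false, not_exists]
      rintro σ ⟨-, hσ, -⟩
      exact hσ (by ext i j; exact i.elim0)
    rw [h1]
    exact (Real.iSup_of_isEmpty _).symm
  haveI : Nonempty (Fin d) := ⟨⟨0, hd⟩⟩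
  have hadj1 : ∀ B : Mat d, (F B).trace = (Fd 1 * B).trace := by
    intro B
    have := hadj 1 B
    rwa [one_mul] at this
  -- decomposition of Hermitian matrices into PSD parts
  have hdecomp : ∀ σ : Mat d, σ.IsHermitian →
      ∃ P N : Mat d, P.PosSemidef ∧ N.PosSemidef ∧ σ = P - N ∧
        (P.trace).re + (N.trace).re = traceNorm σ := by
    intro σ hσ
    refine ⟨cfcM hσ (fun x => max x 0), cfcM hσ (fun x => max (-x) 0),
      cfcM_posSemidef hσ (fun x => max x 0) (fun i => le_max_right _ _),
      cfcM_posSemidef hσ (fun x => max (-x) 0) (fun i => le_max_right _ _), ?_, ?_⟩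
    · rw [cfcM_sub]
      simp only [max_zero_sub_max_neg_zero_eq_self]
      exact (cfcM_id hσ).symm
    · rw [cfcM_trace, cfcM_trace, Complex.ofReal_re, Complex.ofReal_re,
        traceNorm_herm hσ, ← Finset.sum_add_distrib]
      exact Finset.sum_congr rfl fun i _ => max_zero_add_max_neg_zero_eq_abs_self _
  have hFherm : ∀ B : Mat d, B.IsHermitian → (F B).IsHermitian := by
    intro B hB
    obtain ⟨P, N, hP, hN, hPN, -⟩ := hdecomp B hB
    rw [hPN, map_sub]
    exact ((hF P hP).1).sub ((hF N hN).1)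
  set A : Mat d := Fd 1 with hAdef
  -- A is Hermitian
  have hkey : ∀ B : Mat d, B.IsHermitian → (Aᴴ * B).trace = (A * B).trace := by
    intro B hB
    have h1 : (A * B).trace = (F B).trace := (hadj1 B).symm
    have h2 : star ((A * B).trace) = (A * B).trace := by
      rw [h1, ← Matrix.trace_conjTranspose, (hFherm B hB).eq]
    calc (Aᴴ * B).trace = (Aᴴ * Bᴴ).trace := by rw [hB.eq]
      _ = (Bᴴ * Aᴴ).trace := Matrix.trace_mul_comm _ _
      _ = ((A * B)ᴴ).trace := by rw [Matrix.conjTranspose_mul]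
      _ = star ((A * B).trace) := Matrix.trace_conjTranspose _
      _ = (A * B).trace := h2
  have hCzero : ∀ B : Mat d, B.IsHermitian → ((Aᴴ - A) * B).trace = 0 := by
    intro B hB
    rw [Matrix.sub_mul, Matrix.trace_sub, hkey B hB, sub_self]
  have hAherm : A.IsHermitian := by
    rw [Matrix.IsHermitian, ← sub_eq_zero]
    ext i j
    have hB1 : (Matrix.single i j (1:ℂ) + Matrix.single j i 1).IsHermitian := by
      rw [Matrix.IsHermitian, Matrix.conjTranspose_add, stdBasis_conjT, stdBasis_conjT, add_comm]
    have hB2 : (Complex.I • Matrix.single i j (1:ℂ)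
        - Complex.I • Matrix.single j i 1).IsHermitian := by
      rw [Matrix.IsHermitian, Matrix.conjTranspose_sub, Matrix.conjTranspose_smul,
        Matrix.conjTranspose_smul, stdBasis_conjT, stdBasis_conjT, Complex.star_def,
        Complex.conj_I, neg_smul, neg_smul, sub_neg_eq_add, neg_add_eq_sub]
    have e1 := hCzero _ hB1
    have e2 := hCzero _ hB2
    rw [Matrix.mul_add, Matrix.trace_add, trace_mul_std, trace_mul_std] at e1
    rw [Matrix.mul_sub, Matrix.trace_sub, Matrix.mul_smul, Matrix.mul_smul,
      Matrix.trace_smul, Matrix.trace_smul, trace_mul_std, trace_mul_std,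
      smul_eq_mul, smul_eq_mul] at e2
    have h3 : (Aᴴ - A) j i = (Aᴴ - A) i j :=
      mul_left_cancel₀ Complex.I_ne_zero (by linear_combination e2)
    have h4 : (Aᴴ - A) i j = 0 := by linear_combination e1 / 2 - h3 / 2
    simpa using h4
  -- A is PSD
  have hApsd : A.PosSemidef := by
    refine Matrix.PosSemidef.of_dotProduct_mulVec_nonneg hAherm fun x => ?_
    have h1 : dotProduct (star x) (A *ᵥ x) = (A * Matrix.vecMulVec x (star x)).trace :=
      (trace_mul_outer A x).symm
    rw [h1, ← hadj1]
    exact psd_trace_nonneg (hF _ (outer_posSemidef x))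
  -- the operator norm is the largest eigenvalue
  have hsing : singVals A = hAherm.eigenvalues := by
    rw [singVals_eq_eigenvalues hApsd]
  set c : ℝ := opNorm (Fd 1) with hc
  have hbdd : BddAbove (Set.range hAherm.eigenvalues) := Set.Finite.bddAbove (Set.finite_range _)
  have hcs : c = ⨆ i, hAherm.eigenvalues i := by
    rw [hc]; unfold opNorm; rw [show singVals (Fd 1) = hAherm.eigenvalues from hsing]
  have hle : ∀ i, hAherm.eigenvalues i ≤ c := by
    intro i; rw [hcs]; exact le_ciSup hbdd i
  obtain ⟨j, hj⟩ := Finite.exists_max hAherm.eigenvalues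
  have hcj : hAherm.eigenvalues j = c :=
    le_antisymm (hle j) (by rw [hcs]; exact ciSup_le hj)
  have hc0 : 0 ≤ c := hcj ▸ hApsd.eigenvalues_nonneg j
  -- c • 1 - A is PSD
  have hcA : ((c:ℂ) • 1 - A).PosSemidef := by
    have h1 : (c:ℂ) • (1 : Mat d) - A = cfcM hAherm (fun x => c - x) := by
      have h2 := cfcM_sub hAherm (fun _ => c) (fun x => x)
      rw [cfcM_const, cfcM_id] at h2
      exact h2
    rw [h1]
    exact cfcM_posSemidef hAherm _ (fun i => sub_nonneg.mpr (hle i))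
  -- upper bound
  have hub : ∀ σ : Mat d, σ.IsHermitian → traceNorm (F σ) ≤ c * traceNorm σ := by
    intro σ hσ
    obtain ⟨P, N, hP, hN, hPN, hsum⟩ := hdecomp σ hσ
    have hFσ : (F σ).IsHermitian := hFherm σ hσ
    set sgn : ℝ → ℝ := fun x => if 0 ≤ x then 1 else -1 with hsgn
    set W := cfcM hFσ sgn with hW
    have hWF : ((W * F σ).trace).re = traceNorm (F σ) := by
      have h2 := cfcM_mul hFσ sgn (fun x => x)
      rw [cfcM_id hFσ] at h2
      have h3 : (fun x : ℝ => sgn x * x) = (fun x : ℝ => |x|) := by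
        funext x
        simp only [hsgn]
        split_ifs with h
        · rw [one_mul, abs_of_nonneg h]
        · rw [neg_one_mul, abs_of_neg (lt_of_not_ge h)]
      simp only [h3] at h2
      rw [h2, cfcM_trace, Complex.ofReal_re, traceNorm_herm hFσ]
    have gen : ∀ (Q : Mat d), Q.PosSemidef → ((W * Q).trace).re ≤ (Q.trace).re ∧
        -(((W * Q).trace).re) ≤ (Q.trace).re := by
      intro Q hQ
      have h1m : ((1 : Mat d) - W).PosSemidef := by
        have h2 := cfcM_sub hFσ (fun _ => 1) sgn
        rw [cfcM_const] at h2
        simp only [Complex.ofReal_one, one_smul] at h2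
        rw [h2]
        apply cfcM_posSemidef
        intro i
        simp only [hsgn]
        split_ifs <;> norm_num
      have h1p : ((1 : Mat d) + W).PosSemidef := by
        have h2 := cfcM_add hFσ (fun _ => 1) sgn
        rw [cfcM_const] at h2
        simp only [Complex.ofReal_one, one_smul] at h2
        rw [h2]
        apply cfcM_posSemidef
        intro i
        simp only [hsgn]
        split_ifs <;> norm_num
      have g1 := psd_mul_trace_nonneg h1m hQ
      have g2 := psd_mul_trace_nonneg h1p hQ
      rw [Matrix.sub_mul, Matrix.one_mul, Matrix.trace_sub, Complex.sub_re] at g1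
      rw [Matrix.add_mul, Matrix.one_mul, Matrix.trace_add, Complex.add_re] at g2
      constructor <;> linarith
    have hsplit : (W * F σ).trace = (W * F P).trace - (W * F N).trace := by
      conv_lhs => rw [hPN]
      rw [map_sub, Matrix.mul_sub, Matrix.trace_sub]
    have h5 : traceNorm (F σ) ≤ ((F P).trace).re + ((F N).trace).re := by
      rw [← hWF, hsplit, Complex.sub_re]
      have g1 := (gen (F P) (hF P hP)).1
      have g2 := (gen (F N) (hF N hN)).2
      linarith
    have hstep : ∀ Q : Mat d, Q.PosSemidef → ((F Q).trace).re ≤ c * ((Q.trace).re) := by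
      intro Q hQ
      have h6 : (F Q).trace = (A * Q).trace := hadj1 Q
      have h7 := psd_mul_trace_nonneg hcA hQ
      rw [Matrix.sub_mul, Matrix.trace_sub, Complex.sub_re, Matrix.smul_mul, Matrix.one_mul,
        Matrix.trace_smul, smul_eq_mul, Complex.re_ofReal_mul] at h7
      rw [h6]
      linarith
    have hfin : c * traceNorm σ = c * (P.trace).re + c * (N.trace).re := by
      rw [← hsum, mul_add]
    have hQ1 := hstep P hP
    have hQ2 := hstep N hN
    linarith
  -- the maximising state
  set v : Fin d → ℂ := ⇑(hAherm.eigenvectorBasis j) with hv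
  set σ0 : Mat d := Matrix.vecMulVec v (star v) with hσ0
  have hσ0psd : σ0.PosSemidef := outer_posSemidef v
  have hvv : dotProduct (star v) v = 1 := by
    have h1 := EuclideanSpace.inner_eq_star_dotProduct (hAherm.eigenvectorBasis j)
      (hAherm.eigenvectorBasis j)
    have h2 := orthonormal_iff_ite.mp hAherm.eigenvectorBasis.orthonormal j j
    rw [if_pos rfl] at h2
    rw [dotProduct_comm, hv, ← h1, h2]
  have htr0 : σ0.trace = 1 := by
    have h1 := trace_mul_outer 1 v
    rw [Matrix.one_mul, Matrix.one_mulVec] at h1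
    rw [hσ0, h1, hvv]
  have hσ0ne : σ0 ≠ 0 := by
    intro h
    rw [h, Matrix.trace_zero] at htr0
    exact zero_ne_one htr0
  have htrA : (A * σ0).trace = (c : ℂ) := by
    rw [hσ0, trace_mul_outer A v]
    have hmv : A *ᵥ v = ((hAherm.eigenvalues j : ℝ) : ℂ) • v := by
      have h8 := hAherm.mulVec_eigenvectorBasis j
      rw [hv]
      rw [h8]
      ext k
      simp [Complex.real_smul]
    rw [hmv, dotProduct_smul, hvv, smul_eq_mul, mul_one, hcj]
  have hFσ0 : traceNorm (F σ0) = c := by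
    rw [traceNorm_psd (hF σ0 hσ0psd), hadj1 σ0, htrA, Complex.ofReal_re]
  have htn0 : traceNorm σ0 = 1 := by
    rw [traceNorm_psd hσ0psd, htr0, Complex.one_re]
  -- conclusion
  unfold norm11
  apply IsGreatest.csSup_eq
  constructor
  · exact ⟨σ0, hσ0psd.1, hσ0ne, by rw [hFσ0, htn0, div_one]⟩
  · rintro r ⟨σ, hσh, hσne, rfl⟩
    rw [div_le_iff₀ (traceNorm_pos hσne)]
    exact hub σ hσh

end Helpers

/-- STATEMENT 2: for a positive map, `‖F‖_{1→1} = ‖F†(𝟙)‖_∞`. -/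
theorem norm11_eq_opNorm_adjoint_one {d : ℕ} (F Fd : Mat d →ₗ[ℂ] Mat d)
    (hF : IsPositiveMap F)
    (hadj : ∀ A B : Mat d, (A * F B).trace = (Fd A * B).trace) :
    norm11 F = opNorm (Fd 1) := by
  exact norm11_aux F Fd hF hadj
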